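/- Let F₁, …, F₇ be skew-symmetric linear endomorphisms of the Euclidean space ℝ⁸ satisfying Fᵢ ∘ Fᵢ = −id for all i and Fᵢ ∘ Fⱼ + Fⱼ ∘ Fᵢ = 0 for all i ≠ j. Then for every pair i ≠ j, the composition Fᵢ ∘ Fⱼ does not belong to the linear span of {F₁, …, F₇} in the space of endomorphisms of ℝ⁸. -/

import Mathlib

open RealInnerProductSpace

/-- For a system of seven skew-symmetric anticommuting complex structures
`F₁, …, F₇` on the Euclidean space `ℝ⁸`, none of the compositions `Fᵢ ∘ Fⱼ`
(`i ≠ j`) lies in the linear span of `{F₁, …, F₇}` inside `End(ℝ⁸)`. -/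
theorem composition_not_in_span
    (F : Fin 7 → (EuclideanSpace ℝ (Fin 8) →ₗ[ℝ] EuclideanSpace ℝ (Fin 8)))
    (hskew : ∀ i, ∀ x y : EuclideanSpace ℝ (Fin 8), ⟪F i x, y⟫ = -⟪x, F i y⟫)
    (hsq : ∀ i, F i ∘ₗ F i = -LinearMap.id)
    (hanti : ∀ i j, i ≠ j → F i ∘ₗ F j + F j ∘ₗ F i = 0) :
    ∀ i j, i ≠ j → F i ∘ₗ F j ∉ Submodule.span ℝ (Set.range F) := by
  intro i j hij hmem
  set A := Module.End ℝ (EuclideanSpace ℝ (Fin 8)) with hA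
  have hsq' : ∀ k, (F k : A) * F k = -1 := by
    intro k
    have h := hsq k
    rw [Module.End.mul_eq_comp, h]
    rfl
  have hanti' : ∀ k m, k ≠ m → (F k : A) * F m + F m * F k = 0 := by
    intro k m h
    have h2 := hanti k m h
    rw [Module.End.mul_eq_comp, Module.End.mul_eq_comp]
    exact h2
  obtain ⟨c, hc⟩ := (Submodule.mem_span_range_iff_exists_fun ℝ).mp hmem
  set G : A := F i ∘ₗ F j with hGdef
  have hGmul : G = (F i : A) * F j := rfl
  have hcG : G = ∑ m, c m • (F m : A) := hc.symm
  have hji : (F j : A) * F i = -((F i : A) * F j) :=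
    eq_neg_of_add_eq_zero_left (hanti' j i hij.symm)
  -- G squares to -1
  have hGsq : G * G = -1 := by
    rw [hGmul]
    calc (F i : A) * F j * ((F i : A) * F j)
        = (F i : A) * ((F j : A) * F i) * F j := by noncomm_ring
      _ = (F i : A) * (-((F i : A) * F j)) * F j := by rw [hji]
      _ = -(((F i : A) * F i) * ((F j : A) * F j)) := by noncomm_ring
      _ = -((-1 : A) * (-1 : A)) := by rw [hsq' i, hsq' j]
      _ = -1 := by rw [neg_mul_neg, one_mul]
  -- key lemma: for k ∉ {i, j}, G = c k • F k
  have key : ∀ k, k ≠ i → k ≠ j → G = c k • (F k : A) := by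
    intro k hki hkj
    have hki' : (F k : A) * F i = -((F i : A) * F k) :=
      eq_neg_of_add_eq_zero_left (hanti' k i hki)
    have hkj' : (F k : A) * F j = -((F j : A) * F k) :=
      eq_neg_of_add_eq_zero_left (hanti' k j hkj)
    have hcomm : (F k : A) * G = G * F k := by
      rw [hGmul]
      calc (F k : A) * ((F i : A) * F j)
          = ((F k : A) * F i) * F j := by noncomm_ring
        _ = (-((F i : A) * F k)) * F j := by rw [hki']
        _ = -((F i : A) * ((F k : A) * F j)) := by noncomm_ring
        _ = -((F i : A) * (-((F j : A) * F k))) := by rw [hkj']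
        _ = (F i : A) * F j * F k := by noncomm_ring
    have hsum : (F k : A) * G + G * F k = (-(2 * c k)) • (1 : A) := by
      rw [hcG, Finset.mul_sum, Finset.sum_mul, ← Finset.sum_add_distrib]
      rw [Finset.sum_eq_single k]
      · rw [mul_smul_comm, smul_mul_assoc, ← smul_add, hsq' k]
        module
      · intro m _ hmk
        rw [mul_smul_comm, smul_mul_assoc, ← smul_add, hanti' k m (Ne.symm hmk), smul_zero]
      · intro h
        exact absurd (Finset.mem_univ k) h
    have h2 : (F k : A) * G = (-(c k)) • (1 : A) := by
      have h' : (2 : ℝ) • ((F k : A) * G) = (2 : ℝ) • ((-(c k)) • (1 : A)) := by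
        rw [two_smul]
        nth_rewrite 2 [hcomm]
        rw [hsum]
        module
      exact smul_right_injective A two_ne_zero h'
    have h3 := congrArg (fun x => (F k : A) * x) h2
    have h4 : (F k : A) * ((F k : A) * G) = -G := by
      rw [← mul_assoc, hsq' k]; noncomm_ring
    have h5 : (F k : A) * ((-(c k)) • (1 : A)) = (-(c k)) • (F k : A) := by
      rw [mul_smul_comm, mul_one]
    rw [h4, h5] at h3
    have : -G = -(c k • (F k : A)) := by rw [h3]; module
    exact neg_injective this
  -- pick two indices distinct from i, j and from each other
  obtain ⟨k, l, hkl, hki, hkj, hli, hlj⟩ :=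
    (by decide : ∀ i j : Fin 7, ∃ k l : Fin 7, k ≠ l ∧ k ≠ i ∧ k ≠ j ∧ l ≠ i ∧ l ≠ j) i j
  have hk := key k hki hkj
  have hl := key l hli hlj
  have e1 : G * G = (c k • (F k : A)) * (c l • (F l : A)) := congrArg₂ (· * ·) hk hl
  have e2 : G * G = (c l • (F l : A)) * (c k • (F k : A)) := congrArg₂ (· * ·) hl hk
  have e3 : (2 : ℝ) • (G * G) = (c k * c l) • ((F k : A) * F l + (F l : A) * F k) := by
    rw [two_smul]
    nth_rewrite 1 [e1]
    nth_rewrite 1 [e2]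
    rw [smul_mul_assoc, smul_mul_assoc, mul_smul_comm, mul_smul_comm, smul_smul, smul_smul,
      smul_add, mul_comm (c l) (c k)]
  rw [hanti' k l hkl, smul_zero, hGsq] at e3
  -- evaluate at a nonzero vector
  have hv := LinearMap.congr_fun e3 (EuclideanSpace.single (0 : Fin 8) (1 : ℝ))
  rw [LinearMap.smul_apply, LinearMap.neg_apply, Module.End.one_apply, LinearMap.zero_apply,
    smul_neg, neg_eq_zero, smul_eq_zero] at hv
  rcases hv with h | h
  · norm_num at h
  · have h0 := congrArg (fun v => v (0 : Fin 8)) h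
    simp [EuclideanSpace.single_apply] at h0
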